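/- Let N ≥ 1, ρ > 0, D ≥ 0, R ≥ 0, let h : ℝⁿ → ℝ, and for each i = 1,…,N let Jᵢ : ℝⁿ → ℝ be differentiable with Lᵢ-Lipschitz gradient and ρ ≥ Lᵢ. Suppose J_m ∈ ℝ satisfies h(y) + Σᵢ₌₁ᴺ Jᵢ(y) ≥ J_m for all y ∈ ℝⁿ. Let x̃ᵢ, λᵢ, x₀ ∈ ℝⁿ satisfy ‖∇Jᵢ(x̃ᵢ) + λᵢ‖ ≤ D and ‖x̃ᵢ − x₀‖ ≤ R for each i. Then L({x̃ᵢ}, x₀, {λᵢ}) ≥ J_m − N·D·R. -/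

import Mathlib

open RealInnerProductSpace Finset

/-- Descent lemma: a differentiable function with `L`-Lipschitz gradient satisfies
`f b ≤ f a + ⟪∇f a, b − a⟫ + L/2 ‖b − a‖²`. -/
lemma descent_lemma {n : ℕ} {f : EuclideanSpace ℝ (Fin n) → ℝ}
    (hf : Differentiable ℝ f) {L : ℝ}
    (hL : ∀ a b : EuclideanSpace ℝ (Fin n),
      ‖gradient f a - gradient f b‖ ≤ L * ‖a - b‖)
    (a b : EuclideanSpace ℝ (Fin n)) :
    f b ≤ f a + ⟪gradient f a, b - a⟫ + L / 2 * ‖b - a‖ ^ 2 := by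
  set v := b - a with hv
  have key : ∀ t : ℝ, HasDerivAt (fun t : ℝ => f (a + t • v))
      ⟪gradient f (a + t • v), v⟫ t := by
    intro t
    have h1 : HasFDerivAt f
        ((InnerProductSpace.toDual ℝ _) (gradient f (a + t • v))) (a + t • v) :=
      ((hf _).hasGradientAt).hasFDerivAt
    have h2 : HasDerivAt (fun t : ℝ => a + t • v) v t := by
      simpa using ((hasDerivAt_id t).smul_const v).const_add a
    simpa [InnerProductSpace.toDual_apply_apply, Function.comp_def] using h1.comp_hasDerivAt t h2
  set φ : ℝ → ℝ := fun t =>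
    f (a + t • v) - t * ⟪gradient f a, v⟫ - L / 2 * t ^ 2 * ‖v‖ ^ 2 with hφdef
  have hφ : ∀ t : ℝ, HasDerivAt φ
      (⟪gradient f (a + t • v), v⟫ - ⟪gradient f a, v⟫ - L * t * ‖v‖ ^ 2) t := by
    intro t
    have d1 : HasDerivAt (fun t : ℝ => t * ⟪gradient f a, v⟫)
        ⟪gradient f a, v⟫ t := by simpa using (hasDerivAt_id t).mul_const _
    have d2 : HasDerivAt (fun t : ℝ => L / 2 * t ^ 2 * ‖v‖ ^ 2)
        (L * t * ‖v‖ ^ 2) t := by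
      have := ((hasDerivAt_pow 2 t).const_mul (L / 2)).mul_const (‖v‖ ^ 2)
      convert this using 1
      exacts [rfl, rfl, by ring]
    have := ((key t).sub d1).sub d2
    simpa [hφdef, Pi.sub_def] using this
  have anti : AntitoneOn φ (Set.Icc (0:ℝ) 1) := by
    apply antitoneOn_of_deriv_nonpos (convex_Icc 0 1)
    · exact (Differentiable.continuous fun t => (hφ t).differentiableAt).continuousOn
    · exact fun t _ => (hφ t).differentiableAt.differentiableWithinAt
    · intro t ht
      rw [interior_Icc] at ht
      rw [(hφ t).deriv]
      have h3 := real_inner_le_norm (gradient f (a + t • v) - gradient f a) v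
      have h4 := hL (a + t • v) a
      have h5 : ‖a + t • v - a‖ = t * ‖v‖ := by
        rw [add_sub_cancel_left, norm_smul, Real.norm_eq_abs, abs_of_pos ht.1]
      rw [h5] at h4
      have h6 : ‖gradient f (a + t • v) - gradient f a‖ * ‖v‖
          ≤ L * (t * ‖v‖) * ‖v‖ :=
        mul_le_mul_of_nonneg_right h4 (norm_nonneg v)
      rw [inner_sub_left] at h3
      nlinarith [h3, h6]
  have h01 : φ 1 ≤ φ 0 :=
    anti (Set.mem_Icc.2 ⟨le_refl 0, zero_le_one⟩)
      (Set.mem_Icc.2 ⟨zero_le_one, le_refl 1⟩) zero_le_one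
  have e0 : φ 0 = f a := by simp [hφdef]
  have e1 : φ 1 = f b - ⟪gradient f a, v⟫ - L / 2 * ‖v‖ ^ 2 := by
    simp [hφdef, hv]
  rw [e0, e1] at h01
  linarith

/-- The augmented Lagrangian
`L({xᵢ}, x₀, {λᵢ}) = h(x₀) + Σᵢ Jᵢ(xᵢ) + Σᵢ ⟨λᵢ, xᵢ − x₀⟩ + Σᵢ (ρ/2)‖xᵢ − x₀‖²`. -/
noncomputable def augLag {n N : ℕ} (h : EuclideanSpace ℝ (Fin n) → ℝ)
    (J : Fin N → EuclideanSpace ℝ (Fin n) → ℝ) (ρ : ℝ)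
    (x : Fin N → EuclideanSpace ℝ (Fin n)) (x0 : EuclideanSpace ℝ (Fin n))
    (lam : Fin N → EuclideanSpace ℝ (Fin n)) : ℝ :=
  h x0 + (∑ i, J i (x i)) + (∑ i, ⟪lam i, x i - x0⟫) + ∑ i, ρ / 2 * ‖x i - x0‖ ^ 2

/-- lower bound in the proof of the paper's Lemma 3: the augmented
Lagrangian is bounded below by `J_m − N·D·R` under approximate dual feasibility and
small primal residual. -/
theorem augmented_lagrangian_lower_bound {n N : ℕ} (hN : 1 ≤ N) (ρ : ℝ) (hρ : 0 < ρ)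
    (D : ℝ) (hD : 0 ≤ D) (R : ℝ) (hR : 0 ≤ R)
    (h : EuclideanSpace ℝ (Fin n) → ℝ)
    (J : Fin N → EuclideanSpace ℝ (Fin n) → ℝ)
    (hJ : ∀ i, Differentiable ℝ (J i))
    (Li : Fin N → ℝ)
    (hLip : ∀ i, ∀ a b : EuclideanSpace ℝ (Fin n),
      ‖gradient (J i) a - gradient (J i) b‖ ≤ Li i * ‖a - b‖)
    (hρL : ∀ i, Li i ≤ ρ)
    (Jm : ℝ) (hJm : ∀ y : EuclideanSpace ℝ (Fin n), Jm ≤ h y + ∑ i, J i y)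
    (x lam : Fin N → EuclideanSpace ℝ (Fin n)) (x0 : EuclideanSpace ℝ (Fin n))
    (hdual : ∀ i, ‖gradient (J i) (x i) + lam i‖ ≤ D)
    (hprim : ∀ i, ‖x i - x0‖ ≤ R) :
    Jm - N * D * R ≤ augLag h J ρ x x0 lam := by
  have key : ∀ i, J i x0 - D * R ≤
      J i (x i) + ⟪lam i, x i - x0⟫ + ρ / 2 * ‖x i - x0‖ ^ 2 := by
    intro i
    have hdl := descent_lemma (hJ i) (hLip i) (x i) x0
    -- inner product bound
    have hip : -(D * R) ≤ ⟪gradient (J i) (x i) + lam i, x i - x0⟫ := by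
      have h1 := real_inner_le_norm (gradient (J i) (x i) + lam i) (x0 - x i)
      have h2 : ‖gradient (J i) (x i) + lam i‖ * ‖x0 - x i‖ ≤ D * R := by
        apply mul_le_mul (hdual i) _ (norm_nonneg _) hD
        rw [norm_sub_rev]; exact hprim i
      have h3 : ⟪gradient (J i) (x i) + lam i, x0 - x i⟫
          = -⟪gradient (J i) (x i) + lam i, x i - x0⟫ := by
        rw [← inner_neg_right]; congr 1; abel
      linarith [h1.trans h2, h3 ▸ (h1.trans h2)]
    have hsum : ⟪gradient (J i) (x i), x0 - x i⟫
        = -⟪gradient (J i) (x i), x i - x0⟫ := by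
      rw [← inner_neg_right]; congr 1; abel
    have hadd : ⟪gradient (J i) (x i) + lam i, x i - x0⟫
        = ⟪gradient (J i) (x i), x i - x0⟫ + ⟪lam i, x i - x0⟫ := by
      rw [inner_add_left]
    have hnorm : ‖x0 - x i‖ = ‖x i - x0‖ := norm_sub_rev _ _
    have hsq : (ρ - Li i) / 2 * ‖x i - x0‖ ^ 2 ≥ 0 := by
      apply mul_nonneg _ (sq_nonneg _)
      linarith [hρL i]
    rw [hnorm] at hdl
    nlinarith [hip, hdl, hadd, hsum, hsq]
  have hsum : ∑ i, (J i x0 - D * R) ≤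
      ∑ i, (J i (x i) + ⟪lam i, x i - x0⟫ + ρ / 2 * ‖x i - x0‖ ^ 2) :=
    Finset.sum_le_sum fun i _ => key i
  have hL : (∑ i, J i x0) - N * D * R ≤
      ∑ i, (J i (x i) + ⟪lam i, x i - x0⟫ + ρ / 2 * ‖x i - x0‖ ^ 2) := by
    have : ∑ i : Fin N, (J i x0 - D * R) = (∑ i, J i x0) - N * D * R := by
      rw [Finset.sum_sub_distrib, Finset.sum_const, Finset.card_univ,
        Fintype.card_fin, nsmul_eq_mul]
      ring
    linarith [this ▸ hsum]
  have hJm' := hJm x0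
  unfold augLag
  rw [Finset.sum_add_distrib, Finset.sum_add_distrib] at hL
  linarith
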